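/- Each right type is inhabited by a right invertible term: if τ ≤ ρ₁ → … → ρₘ → μ and τ → ρᵢ is inhabited for each 1 ≤ i ≤ m, then there exists a right invertible term (namely λz.zM₁…Mₘ where Mᵢ witness inhabitation composed appropriately) that inhabits τ → μ. -/

import Mathlib

/-- Terms of the λ⊥-calculus (de Bruijn indices). -/
inductive Tm : Type
  | var : ℕ → Tm
  | bot : Tm
  | lam : Tm → Tm
  | app : Tm → Tm → Tm
  deriving DecidableEq

namespace Tm

/-- Lift (shift by one) all de Bruijn indices ≥ k. -/
def lift : Tm → ℕ → Tm
  | var n, k => if n < k then var n else var (n+1)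
  | bot, _ => bot
  | lam M, k => lam (lift M (k+1))
  | app M N, k => app (lift M k) (lift N k)

/-- Capture-avoiding substitution of N for variable k. -/
def subst : Tm → ℕ → Tm → Tm
  | var n, k, N => if n < k then var n else if n = k then N else var (n-1)
  | bot, _, _ => bot
  | lam M, k, N => lam (subst M (k+1) (lift N 0))
  | app M P, k, N => app (subst M k N) (subst P k N)

/-- One-step β⊥-reduction (compatible closure). -/
inductive Step : Tm → Tm → Prop
  | beta (M N : Tm) : Step (app (lam M) N) (subst M 0 N)
  | botApp (N : Tm) : Step (app bot N) bot
  | botLam : Step (lam bot) bot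
  | appL {M M'} (N) : Step M M' → Step (app M N) (app M' N)
  | appR (M) {N N'} : Step N N' → Step (app M N) (app M N')
  | lamC {M M'} : Step M M' → Step (lam M) (lam M')

/-- Multi-step reduction. -/
def Red : Tm → Tm → Prop := Relation.ReflTransGen Step

/-- β⊥-conversion: M = N iff they have a common reduct. -/
def Conv (M N : Tm) : Prop := ∃ P, Red M P ∧ Red N P

/-- The identity combinator I = λx.x. -/
def iTm : Tm := lam (var 0)

/-- Composition M ∘ N = λz.M(Nz). -/
def comp (M N : Tm) : Tm := lam (app (lift M 0) (app (lift N 0) (var 0)))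

/-- Apply M to a list of arguments. -/
def applist (M : Tm) (Ms : List Tm) : Tm := Ms.foldl app M

/-- Iterated λ-abstraction. -/
def iterLam : ℕ → Tm → Tm
  | 0, M => M
  | n+1, M => lam (iterLam n M)

/-- The selector λt x₁ … xₘ. t  (a simple right inverse). -/
def sel (m : ℕ) : Tm := iterLam (m+1) (var m)

/-- Number of initial λ-abstractions of a term. -/
def leadLams : Tm → ℕ
  | lam M => leadLams M + 1
  | _ => 0

end Tm

mutual
/-- Strict intersection types μ ::= φ | ω | σ → μ. -/
inductive STy : Type
  | tvar : ℕ → STy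
  | omega : STy
  | arrow : ITy → STy → STy
/-- Intersections σ ::= μ | σ ∧ σ. -/
inductive ITy : Type
  | strict : STy → ITy
  | inter : ITy → ITy → ITy
end

/-- The subtyping preorder on (strict) intersection types. -/
inductive SubTy : ITy → ITy → Prop
  | refl (σ) : SubTy σ σ
  | trans {σ τ ρ} : SubTy σ τ → SubTy τ ρ → SubTy σ ρ
  | toOmega (σ) : SubTy σ (.strict .omega)
  | omegaArr : SubTy (.strict .omega) (.strict (.arrow (.strict .omega) .omega))
  | interL (σ τ) : SubTy (.inter σ τ) σ
  | interR (σ τ) : SubTy (.inter σ τ) τ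
  | interMono {σ₁ σ₂ τ₁ τ₂} : SubTy σ₁ τ₁ → SubTy σ₂ τ₂ → SubTy (.inter σ₁ σ₂) (.inter τ₁ τ₂)
  | arrow {σ τ : ITy} {μ ν : STy} : SubTy τ σ → SubTy (.strict μ) (.strict ν) →
      SubTy (.strict (.arrow σ μ)) (.strict (.arrow τ ν))

/-- σ ∼ τ : mutual subtyping. -/
def EqvTy (σ τ : ITy) : Prop := SubTy σ τ ∧ SubTy τ σ

/-- μ is a conjunct (component) of the intersection σ. -/
inductive IsComp : STy → ITy → Prop
  | strict (μ) : IsComp μ (.strict μ)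
  | left {μ σ} (τ) : IsComp μ σ → IsComp μ (.inter σ τ)
  | right {μ τ} (σ) : IsComp μ τ → IsComp μ (.inter σ τ)

/-- The essential intersection type assignment system (contexts are de Bruijn lists). -/
inductive Der : List ITy → Tm → STy → Prop
  | var {Γ n σ μ} : Γ[n]? = some σ → IsComp μ σ → Der Γ (.var n) μ
  | omega (Γ M) : Der Γ M .omega
  | sub {Γ M μ ν} : Der Γ M μ → SubTy (.strict μ) (.strict ν) → Der Γ M ν
  | lam {Γ M σ μ} : Der (σ :: Γ) M μ → Der Γ (.lam M) (.arrow σ μ)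
  | app {Γ M N σ μ} : Der Γ M (.arrow σ μ) → (∀ ν, IsComp ν σ → Der Γ N ν) →
      Der Γ (.app M N) μ

/-- A strict type is inhabited if some closed term has it. -/
def InhabS (μ : STy) : Prop := ∃ M, Der [] M μ

/-- An intersection is inhabited if a single closed term has all its conjuncts. -/
def InhabI (σ : ITy) : Prop := ∃ M, ∀ μ, IsComp μ σ → Der [] M μ

/-- σ → ρ is inhabited: one term inhabits σ → μ for every conjunct μ of ρ. -/
def InhabArrow (σ ρ : ITy) : Prop := ∃ M, ∀ μ, IsComp μ ρ → Der [] M (.arrow σ μ)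

/-- ρ₁ → … → ρₘ → μ. -/
def arrows (l : List ITy) (μ : STy) : STy := l.foldr .arrow μ

/-- μ ◁ ν : μ is a retract of ν. -/
def Retract (μ ν : STy) : Prop :=
  ∃ L R, Der [] L (.arrow (.strict ν) μ) ∧ Der [] R (.arrow (.strict μ) ν) ∧
    Tm.Conv (Tm.comp L R) Tm.iTm

/-! ### Auxiliary lemmas -/

section Aux

open Tm

lemma applist_cons (h a : Tm) (l : List Tm) :
    Tm.applist h (a :: l) = Tm.applist (.app h a) l := rfl

lemma lift_iterLam_var {n k j : ℕ} (h : j < n + k) :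
    Tm.lift (Tm.iterLam n (.var j)) k = Tm.iterLam n (.var j) := by
  induction n generalizing k with
  | zero => simp [Tm.iterLam, Tm.lift, show j < k from by omega]
  | succ n ih =>
    simp only [Tm.iterLam, Tm.lift]
    rw [ih (by omega)]

lemma subst_iterLam_self (m k : ℕ) :
    Tm.subst (Tm.iterLam m (.var (m + k))) k (.var k) = Tm.iterLam m (.var (m + k)) := by
  induction m generalizing k with
  | zero => simp [Tm.iterLam, Tm.subst]
  | succ m ih =>
    simp only [Tm.iterLam, Tm.subst, Tm.lift]
    rw [if_neg (by omega)]
    rw [show m + 1 + k = m + (k + 1) from by omega]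
    rw [ih (k + 1)]

lemma subst_iterLam_dec (m k : ℕ) (N : Tm) :
    Tm.subst (Tm.iterLam m (.var (m + k + 1))) k N = Tm.iterLam m (.var (m + k)) := by
  induction m generalizing k N with
  | zero =>
    simp only [Tm.iterLam, Tm.subst, Nat.zero_add]
    rw [if_neg (by omega), if_neg (by omega)]
    simp
  | succ m ih =>
    simp only [Tm.iterLam, Tm.subst]
    rw [show m + 1 + k + 1 = m + (k + 1) + 1 from by omega]
    rw [ih (k + 1)]
    rw [show m + (k + 1) = m + 1 + k from by omega]

lemma lift_applist (l : List Tm) (h : Tm) (k : ℕ) :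
    Tm.lift (Tm.applist h l) k = Tm.applist (Tm.lift h k) (l.map (Tm.lift · k)) := by
  induction l generalizing h with
  | nil => rfl
  | cons a l ih => simp only [List.map_cons, applist_cons, ih, Tm.lift]

lemma subst_applist (l : List Tm) (h : Tm) (k : ℕ) (N : Tm) :
    Tm.subst (Tm.applist h l) k N
      = Tm.applist (Tm.subst h k N) (l.map (Tm.subst · k N)) := by
  induction l generalizing h with
  | nil => rfl
  | cons a l ih => simp only [List.map_cons, applist_cons, ih, Tm.subst]

lemma step_applist {M M' : Tm} (h : Tm.Step M M') (l : List Tm) :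
    Tm.Step (Tm.applist M l) (Tm.applist M' l) := by
  induction l generalizing M M' with
  | nil => exact h
  | cons a l ih => exact ih (Tm.Step.appL a h)

lemma red_lam {M M' : Tm} (h : Tm.Red M M') : Tm.Red (.lam M) (.lam M') :=
  Relation.ReflTransGen.lift (r := Tm.Step) Tm.lam (fun _ _ => Tm.Step.lamC) _ _ h

lemma red_applist_iterLam :
    ∀ (as : List Tm),
      Tm.Red (Tm.applist (Tm.iterLam as.length (.var as.length)) as) (.var 0)
  | [] => Relation.ReflTransGen.refl
  | a :: as => by
    have hb : Tm.Step (Tm.app (.lam (Tm.iterLam as.length (.var (as.length + 1)))) a)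
        (Tm.iterLam as.length (.var as.length)) := by
      have hbeta := Tm.Step.beta (Tm.iterLam as.length (.var (as.length + 1))) a
      rwa [show Tm.subst (Tm.iterLam as.length (.var (as.length + 1))) 0 a
          = Tm.iterLam as.length (.var as.length) from by
        simpa using subst_iterLam_dec as.length 0 a] at hbeta
    exact Relation.ReflTransGen.head (step_applist hb as) (red_applist_iterLam as)

lemma isComp_strict {μ ν : STy} (h : IsComp μ (.strict ν)) : μ = ν := by
  cases h; rfl

lemma isComp_inter {μ : STy} {σ τ : ITy} (h : IsComp μ (.inter σ τ)) :
    IsComp μ σ ∨ IsComp μ τ := by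
  cases h with
  | left _ h => exact Or.inl h
  | right _ h => exact Or.inr h

lemma sub_admissible {σ τ : ITy} (h : SubTy σ τ) :
    ∀ {Γ M}, (∀ μ, IsComp μ σ → Der Γ M μ) → ∀ ν, IsComp ν τ → Der Γ M ν := by
  induction h with
  | refl σ => exact fun hM ν hν => hM ν hν
  | trans h1 h2 ih1 ih2 => exact fun hM ν hν => ih2 (fun μ hμ => ih1 hM μ hμ) ν hν
  | toOmega σ =>
    intro Γ M hM ν hν
    obtain rfl := isComp_strict hν
    exact .omega _ _
  | omegaArr =>
    intro Γ M hM ν hν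
    obtain rfl := isComp_strict hν
    exact .sub (.omega _ _) .omegaArr
  | interL σ τ => exact fun hM ν hν => hM ν (.left _ hν)
  | interR σ τ => exact fun hM ν hν => hM ν (.right _ hν)
  | interMono h1 h2 ih1 ih2 =>
    intro Γ M hM ν hν
    rcases isComp_inter hν with hc | hc
    · exact ih1 (fun μ hμ => hM μ (.left _ hμ)) ν hc
    · exact ih2 (fun μ hμ => hM μ (.right _ hμ)) ν hc
  | arrow h1 h2 ih1 ih2 =>
    intro Γ M hM ν hν
    obtain rfl := isComp_strict hν
    exact .sub (hM _ (.strict _)) (.arrow h1 h2)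

lemma der_lift {Γ : List ITy} {M : Tm} {μ : STy} (h : Der Γ M μ) :
    ∀ Γ₁ Γ₂ (σ : ITy), Γ = Γ₁ ++ Γ₂ → Der (Γ₁ ++ σ :: Γ₂) (Tm.lift M Γ₁.length) μ := by
  induction h with
  | @var Γ n σ' μ' hget hcomp =>
    rintro Γ₁ Γ₂ σ rfl
    simp only [Tm.lift]
    split
    · rename_i hn
      refine Der.var ?_ hcomp
      rw [List.getElem?_append_left hn] at hget
      rw [List.getElem?_append_left hn]
      exact hget
    · rename_i hn
      refine Der.var ?_ hcomp
      rw [List.getElem?_append_right (by omega)] at hget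
      rw [List.getElem?_append_right (by omega)]
      rw [show n + 1 - Γ₁.length = (n - Γ₁.length) + 1 from by omega]
      simpa using hget
  | omega Γ M => exact fun Γ₁ Γ₂ σ _ => Der.omega _ _
  | sub _ hs ih => exact fun Γ₁ Γ₂ σ he => Der.sub (ih Γ₁ Γ₂ σ he) hs
  | @lam Γ M σ' μ' _ ih =>
    rintro Γ₁ Γ₂ σ rfl
    exact Der.lam (ih (σ' :: Γ₁) Γ₂ σ rfl)
  | app _ _ ih1 ih2 =>
    rintro Γ₁ Γ₂ σ rfl
    exact Der.app (ih1 Γ₁ Γ₂ σ rfl) (fun ν hν => ih2 ν hν Γ₁ Γ₂ σ rfl)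

lemma der_applist {Γ : List ITy} {h : Tm} {ps : List ITy} {as : List Tm} {μ : STy}
    (hh : Der Γ h (arrows ps μ))
    (has : List.Forall₂ (fun ρ a => ∀ ν, IsComp ν ρ → Der Γ a ν) ps as) :
    Der Γ (Tm.applist h as) μ := by
  induction has generalizing h with
  | nil => exact hh
  | @cons ρ a ps as ha _ ih =>
    rw [applist_cons]
    exact ih (Der.app (by simpa [arrows] using hh) ha)

end Aux

/-- each right type is inhabited by a right invertible term. -/
theorem right_type_inhabited {τ : ITy} {μ : STy} {ρs : List ITy}
    (hsub : SubTy τ (.strict (arrows ρs μ))) (hinh : ∀ ρ ∈ ρs, InhabArrow τ ρ) :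
    ∃ M : Tm, Der [] M (.arrow τ μ) ∧ ∃ R, Tm.Conv (Tm.comp M R) Tm.iTm := by
  classical
  -- choice of witnesses
  let g : ITy → Tm := fun ρ => if h : InhabArrow τ ρ then h.choose else .bot
  have hgspec : ∀ ρ ∈ ρs, ∀ ν, IsComp ν ρ → Der [] (g ρ) (.arrow τ ν) := by
    intro ρ hρ ν hν
    have hin := hinh ρ hρ
    show Der [] (if h : InhabArrow τ ρ then h.choose else .bot) (.arrow τ ν)
    rw [dif_pos hin]
    exact hin.choose_spec ν hν
  let as : List Tm := ρs.map (fun ρ => Tm.app ((g ρ).lift 0) (.var 0))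
  let M : Tm := .lam (.applist (.var 0) as)
  have hlen : as.length = ρs.length := List.length_map _
  refine ⟨M, ?_, Tm.sel ρs.length, ?_⟩
  · -- typing
    refine Der.lam (der_applist (ps := ρs) ?_ ?_)
    · exact sub_admissible hsub
        (fun μ' hμ' => Der.var (by simp) hμ') _ (.strict _)
    · rw [List.forall₂_map_right_iff]
      refine List.forall₂_same.mpr ?_
      intro ρ hρ ν hν
      refine Der.app (σ := τ) ?_ (fun ν' hν' => Der.var (by simp) hν')
      have := der_lift (hgspec ρ hρ ν hν) [] [] τ rfl
      simpa using this
  · -- right invertibility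
    set m := ρs.length with hm
    set P : Tm := Tm.iterLam m (.var m) with hP
    refine ⟨Tm.iTm, ?_, Relation.ReflTransGen.refl⟩
    have hliftsel : Tm.lift (Tm.sel m) 0 = Tm.sel m := by
      have : Tm.sel m = Tm.iterLam (m + 1) (.var m) := rfl
      rw [this]
      exact lift_iterLam_var (by omega)
    have hstep1 : Tm.Step (Tm.app (Tm.sel m) (.var 0)) P := by
      have hbeta := Tm.Step.beta (Tm.iterLam m (.var m)) (.var 0)
      rwa [show Tm.subst (Tm.iterLam m (.var m)) 0 (.var 0) = P from by
        simpa using subst_iterLam_self m 0] at hbeta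
    have hliftM : Tm.lift M 0
        = Tm.lam (Tm.applist (.var 0) (as.map (Tm.lift · 1))) := by
      show Tm.lam (Tm.lift (Tm.applist (.var 0) as) 1) = _
      rw [lift_applist]
      simp [Tm.lift]
    have hstep2 : Tm.Step (Tm.app (Tm.lift M 0) P)
        (Tm.applist P ((as.map (Tm.lift · 1)).map (Tm.subst · 0 P))) := by
      rw [hliftM]
      have hbeta := Tm.Step.beta (Tm.applist (.var 0) (as.map (Tm.lift · 1))) P
      rwa [show Tm.subst (Tm.applist (.var 0) (as.map (Tm.lift · 1))) 0 P
          = Tm.applist P ((as.map (Tm.lift · 1)).map (Tm.subst · 0 P)) from by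
        rw [subst_applist]; simp [Tm.subst]] at hbeta
    have hred3 : Tm.Red (Tm.applist P ((as.map (Tm.lift · 1)).map (Tm.subst · 0 P)))
        (.var 0) := by
      have hl : ((as.map (Tm.lift · 1)).map (Tm.subst · 0 P)).length = m := by
        simp [hlen]
      have := red_applist_iterLam ((as.map (Tm.lift · 1)).map (Tm.subst · 0 P))
      rwa [hl] at this
    show Tm.Red (Tm.comp M (Tm.sel m)) Tm.iTm
    have h1 : Tm.Step (Tm.comp M (Tm.sel m))
        (Tm.lam (Tm.app (Tm.lift M 0) P)) := by
      show Tm.Step (Tm.lam (Tm.app (Tm.lift M 0) (Tm.app (Tm.lift (Tm.sel m) 0) (.var 0)))) _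
      rw [hliftsel]
      exact Tm.Step.lamC (Tm.Step.appR _ hstep1)
    refine Relation.ReflTransGen.head h1 ?_
    refine Relation.ReflTransGen.head (Tm.Step.lamC hstep2) ?_
    exact red_lam hred3
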